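/- Let A be an almost disjoint family on ω of size less than 𝔭 and let (X_n) be infinite subsets of ω such that for every A ∈ I(A) the set {n : X_n ⊆* A} is finite. Then there is B almost disjoint from every member of A such that B ∩ X_n ≠ ∅ for every n. -/

import Mathlib

def IsADFamily (𝒜 : Set (Set ℕ)) : Prop :=
  𝒜.Infinite ∧ (∀ A ∈ 𝒜, A.Infinite) ∧
  ∀ A ∈ 𝒜, ∀ B ∈ 𝒜, A ≠ B → (A ∩ B).Finite

/-- The ideal generated by the family `𝒜` together with the finite sets. -/
def idealOf (𝒜 : Set (Set ℕ)) : Set (Set ℕ) :=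
  {B | ∃ F : Set (Set ℕ), F ⊆ 𝒜 ∧ F.Finite ∧ (B \ ⋃₀ F).Finite}

/-- The pseudo-intersection number 𝔭: the least cardinality of a family of
subsets of ω with the strong finite intersection property but with no
infinite pseudo-intersection. -/
noncomputable def pNumber : Cardinal :=
  sInf {c : Cardinal | ∃ F : Set (Set ℕ), Cardinal.mk ↥F = c ∧
    (∀ G : Set (Set ℕ), G ⊆ F → G.Finite → G.Nonempty → (⋂₀ G).Infinite) ∧
    ¬ ∃ X : Set ℕ, X.Infinite ∧ ∀ A ∈ F, (X \ A).Finite}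

/- ------------------------------------------------------------------ -/
/- Auxiliary material                                                  -/
/- ------------------------------------------------------------------ -/

lemma aux_pseudo (F : Set (Set ℕ)) (hc : Cardinal.mk ↥F < pNumber)
    (hs : ∀ G : Set (Set ℕ), G ⊆ F → G.Finite → G.Nonempty → (⋂₀ G).Infinite) :
    ∃ Z : Set ℕ, Z.Infinite ∧ ∀ A ∈ F, (Z \ A).Finite := by
  by_contra h
  exact absurd hc (not_lt.2 (csInf_le' ⟨F, rfl, hs, h⟩))

/-- The members of `𝒜` having infinite intersection with `X i`. -/
def RELf (𝒜 : Set (Set ℕ)) (X : ℕ → Set ℕ) (i : ℕ) : Set (Set ℕ) :=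
  {A | A ∈ 𝒜 ∧ (A ∩ X i).Infinite}

lemma REL_subset_trap {𝒜 : Set (Set ℕ)} {X : ℕ → Set ℕ} (had : IsADFamily 𝒜) {i : ℕ}
    {F : Set (Set ℕ)} (hF𝒜 : F ⊆ 𝒜) (hFfin : F.Finite) (htrap : (X i \ ⋃₀ F).Finite) :
    RELf 𝒜 X i ⊆ F := by
  rintro A ⟨hA𝒜, hAinf⟩
  by_contra hAF
  have hsub : A ∩ X i ⊆ (X i \ ⋃₀ F) ∪ ⋃ B ∈ F, A ∩ B := by
    rintro x ⟨hxA, hxX⟩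
    by_cases hx : x ∈ ⋃₀ F
    · obtain ⟨B, hB, hxB⟩ := hx
      exact Or.inr (Set.mem_biUnion hB ⟨hxA, hxB⟩)
    · exact Or.inl ⟨hxX, hx⟩
  have hfin2 : ((X i \ ⋃₀ F) ∪ ⋃ B ∈ F, A ∩ B).Finite := by
    refine htrap.union (Set.Finite.biUnion hFfin ?_)
    intro B hB
    exact had.2.2 A hA𝒜 B (hF𝒜 hB) (fun hEq => hAF (hEq ▸ hB))
  exact hAinf (hfin2.subset hsub)

lemma trap_rel {𝒜 : Set (Set ℕ)} {X : ℕ → Set ℕ} (had : IsADFamily 𝒜) {i : ℕ}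
    (hi : X i ∈ idealOf 𝒜) : (X i \ ⋃₀ RELf 𝒜 X i).Finite := by
  obtain ⟨F, hF𝒜, hFfin, htrap⟩ := hi
  have hsub : X i \ ⋃₀ RELf 𝒜 X i ⊆
      (X i \ ⋃₀ F) ∪ ⋃ B ∈ F, ((X i ∩ B) \ ⋃₀ RELf 𝒜 X i) := by
    rintro x ⟨hxX, hxR⟩
    by_cases hx : x ∈ ⋃₀ F
    · obtain ⟨B, hB, hxB⟩ := hx
      exact Or.inr (Set.mem_biUnion hB ⟨⟨hxX, hxB⟩, hxR⟩)
    · exact Or.inl ⟨hxX, hx⟩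
  refine Set.Finite.subset (htrap.union (Set.Finite.biUnion hFfin ?_)) hsub
  intro B hB
  by_cases hBR : B ∈ RELf 𝒜 X i
  · refine (Set.finite_empty).subset ?_
    rintro x ⟨⟨_, hxB⟩, hxR⟩
    exact hxR ⟨B, hBR, hxB⟩
  · have hBf : ¬ (B ∩ X i).Infinite := fun hinf => hBR ⟨hF𝒜 hB, hinf⟩
    rw [Set.not_infinite] at hBf
    have hXBfin : (X i ∩ B).Finite := hBf.subset (fun x hx => ⟨hx.2, hx.1⟩)
    exact hXBfin.subset Set.diff_subset

lemma REL_nonempty {𝒜 : Set (Set ℕ)} {X : ℕ → Set ℕ} (had : IsADFamily 𝒜)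
    (hXinf : ∀ n, (X n).Infinite) {i : ℕ} (hi : X i ∈ idealOf 𝒜) :
    (RELf 𝒜 X i).Nonempty := by
  rw [Set.nonempty_iff_ne_empty]
  intro h
  have := trap_rel had hi
  rw [h] at this
  simp only [Set.sUnion_empty, Set.diff_empty] at this
  exact hXinf i this

/-- predicate: `j` is a first-occurrence index in `hist` of a member of `RELf 𝒜 X i`. -/
def Predf (𝒜 : Set (Set ℕ)) (X : ℕ → Set ℕ) (i : ℕ) (hist : List (Set ℕ)) (j : ℕ) : Prop :=
  j < hist.length ∧ hist.getD j ∅ ∈ RELf 𝒜 X i ∧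
    ∀ j' < j, hist.getD j' ∅ ≠ hist.getD j ∅

open scoped Classical in
noncomputable def jstarf (𝒜 : Set (Set ℕ)) (X : ℕ → Set ℕ) (i : ℕ)
    (hist : List (Set ℕ)) : ℕ :=
  Nat.findGreatest (Predf 𝒜 X i hist) hist.length

open scoped Classical in
noncomputable def pickf (𝒜 : Set (Set ℕ)) (X : ℕ → Set ℕ) (i : ℕ)
    (hist : List (Set ℕ)) : Set ℕ :=
  if h : ∃ A, A ∈ RELf 𝒜 X i ∧ A ∉ hist then h.choose
  else hist.getD (jstarf 𝒜 X i hist) ∅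

noncomputable def Hf (𝒜 : Set (Set ℕ)) (X : ℕ → Set ℕ) : ℕ → List (Set ℕ)
  | 0 => []
  | (k+1) => Hf 𝒜 X k ++ [pickf 𝒜 X (Nat.nth (fun i => X i ∈ idealOf 𝒜) k) (Hf 𝒜 X k)]

noncomputable def Df (𝒜 : Set (Set ℕ)) (X : ℕ → Set ℕ) (k : ℕ) : Set ℕ :=
  pickf 𝒜 X (Nat.nth (fun i => X i ∈ idealOf 𝒜) k) (Hf 𝒜 X k)

lemma lenH (𝒜 : Set (Set ℕ)) (X : ℕ → Set ℕ) (k : ℕ) : (Hf 𝒜 X k).length = k := by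
  induction k with
  | zero => rfl
  | succ k ih => simp [Hf, ih]

lemma HgetD (𝒜 : Set (Set ℕ)) (X : ℕ → Set ℕ) {j k : ℕ} (h : j < k) :
    (Hf 𝒜 X k).getD j ∅ = Df 𝒜 X j := by
  induction k with
  | zero => omega
  | succ k ih =>
    rcases Nat.lt_or_ge j k with h' | h'
    · rw [show Hf 𝒜 X (k+1) = Hf 𝒜 X k ++ [Df 𝒜 X k] from rfl,
        List.getD_append _ _ _ _ (by rw [lenH]; exact h'), ih h']
    · have hjk : j = k := by omega
      subst hjk
      rw [show Hf 𝒜 X (j+1) = Hf 𝒜 X j ++ [Df 𝒜 X j] from rfl]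
      rw [List.getD_eq_getElem _ _ (by simp [lenH])]
      exact List.getElem_concat_length (by rw [lenH]) _

lemma memH (𝒜 : Set (Set ℕ)) (X : ℕ → Set ℕ) {A : Set ℕ} {k : ℕ} :
    A ∈ Hf 𝒜 X k ↔ ∃ j < k, Df 𝒜 X j = A := by
  constructor
  · intro h
    obtain ⟨j, hj, hget⟩ := List.getElem_of_mem h
    refine ⟨j, by rwa [lenH] at hj, ?_⟩
    rw [← HgetD 𝒜 X (by rwa [lenH] at hj : j < k), List.getD_eq_getElem _ _ hj, hget]
  · rintro ⟨j, hj, rfl⟩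
    have h1 : (Hf 𝒜 X k).getD j ∅ = Df 𝒜 X j := HgetD 𝒜 X hj
    have h2 : j < (Hf 𝒜 X k).length := by rwa [lenH]
    rw [List.getD_eq_getElem _ _ h2] at h1
    rw [← h1]
    exact List.getElem_mem h2

lemma first_occ {hist : List (Set ℕ)} {A : Set ℕ} (h : A ∈ hist) :
    ∃ j, j < hist.length ∧ hist.getD j ∅ = A ∧ ∀ j' < j, hist.getD j' ∅ ≠ A := by
  classical
  have hex : ∃ j, j < hist.length ∧ hist.getD j ∅ = A := by
    obtain ⟨j, hj, hget⟩ := List.getElem_of_mem h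
    exact ⟨j, hj, by rw [List.getD_eq_getElem _ _ hj]; exact hget⟩
  refine ⟨Nat.find hex, (Nat.find_spec hex).1, (Nat.find_spec hex).2, ?_⟩
  intro j' hj' hEq
  exact Nat.find_min hex hj' ⟨lt_trans hj' (Nat.find_spec hex).1, hEq⟩

lemma exists_m (𝒜 : Set (Set ℕ)) (X : ℕ → Set ℕ) (had : IsADFamily 𝒜)
    (hXinf : ∀ n, (X n).Infinite)
    (hfin : ∀ A ∈ idealOf 𝒜, {n : ℕ | (X n \ A).Finite}.Finite) :
    ∃ m : Set ℕ → ℕ, ∀ i, X i ∈ idealOf 𝒜 →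
      ∃ A, A ∈ 𝒜 ∧ (A ∩ X i).Infinite ∧ i < m A := by
  classical
  by_cases hTr : {i | X i ∈ idealOf 𝒜}.Finite
  · obtain ⟨N, hN⟩ := hTr.bddAbove
    refine ⟨fun _ => N + 1, fun i hi => ?_⟩
    obtain ⟨A, hA⟩ := REL_nonempty had hXinf hi
    exact ⟨A, hA.1, hA.2, Nat.lt_succ_of_le (hN hi)⟩
  · set pT : ℕ → Prop := fun i => X i ∈ idealOf 𝒜 with hpT
    have hI : (setOf pT).Infinite := hTr
    have hmem : ∀ k, pT (Nat.nth pT k) := Nat.nth_mem_of_infinite hI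
    have hinj : Function.Injective (Nat.nth pT) := Nat.nth_injective hI
    -- P1 : designation at step k is relevant
    have hP1 : ∀ k, Df 𝒜 X k ∈ RELf 𝒜 X (Nat.nth pT k) := by
      intro k
      obtain ⟨A₀, hA₀⟩ := REL_nonempty had hXinf (hmem k)
      show pickf 𝒜 X (Nat.nth pT k) (Hf 𝒜 X k) ∈ _
      rw [pickf]
      split
      · next h => exact h.choose_spec.1
      · next h =>
        have hA₀H : A₀ ∈ Hf 𝒜 X k := by
          by_contra hc; exact h ⟨A₀, hA₀, hc⟩
        obtain ⟨j₀, hj₀len, hj₀get, hj₀min⟩ := first_occ hA₀H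
        have hPj₀ : Predf 𝒜 X (Nat.nth pT k) (Hf 𝒜 X k) j₀ :=
          ⟨hj₀len, hj₀get ▸ hA₀, fun j' h' => hj₀get ▸ hj₀min j' h'⟩
        have := Nat.findGreatest_spec (le_of_lt hj₀len) hPj₀
        exact this.2.1
    -- FIN : each A designated finitely often
    have hFIN : ∀ A : Set ℕ, {k | Df 𝒜 X k = A}.Finite := by
      intro A
      by_contra hinf
      replace hinf : {k | Df 𝒜 X k = A}.Infinite := hinf
      have hne : ∃ k, Df 𝒜 X k = A := hinf.nonempty
      set e := Nat.find hne with he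
      have heA : Df 𝒜 X e = A := Nat.find_spec hne
      set Dstar : Set (Set ℕ) := Df 𝒜 X '' {j | j ≤ e} with hDstar
      have hDfin : Dstar.Finite := (Set.finite_le_nat e).image _
      have hDsub : Dstar ⊆ 𝒜 := by
        rintro _ ⟨j, _, rfl⟩; exact (hP1 j).1
      have hIdeal : ⋃₀ Dstar ∈ idealOf 𝒜 :=
        ⟨Dstar, hDsub, hDfin, by simp⟩
      have hbadfin := hfin _ hIdeal
      have hclaim : ∀ k, Df 𝒜 X k = A → k ≠ e →
          RELf 𝒜 X (Nat.nth pT k) ⊆ Dstar := by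
        intro k hkA hke
        have hek : e < k := lt_of_le_of_ne (Nat.find_min' hne hkA) (Ne.symm hke)
        have hAH : A ∈ Hf 𝒜 X k := (memH 𝒜 X).2 ⟨e, hek, heA⟩
        have hDk0 : Df 𝒜 X k = pickf 𝒜 X (Nat.nth pT k) (Hf 𝒜 X k) := rfl
        rw [pickf] at hDk0
        split at hDk0
        · next h =>
          exact absurd (hkA ▸ hAH) (hDk0 ▸ h.choose_spec.2)
        · next hstuck =>
          -- Predf holds at jstar
          obtain ⟨A₀, hA₀⟩ := REL_nonempty had hXinf (hmem k)
          have hA₀H : A₀ ∈ Hf 𝒜 X k := by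
            by_contra hc; exact hstuck ⟨A₀, hA₀, hc⟩
          obtain ⟨j₀, hj₀len, hj₀get, hj₀min⟩ := first_occ hA₀H
          have hPj₀ : Predf 𝒜 X (Nat.nth pT k) (Hf 𝒜 X k) j₀ :=
            ⟨hj₀len, hj₀get ▸ hA₀, fun j' h' => hj₀get ▸ hj₀min j' h'⟩
          have hPstar : Predf 𝒜 X (Nat.nth pT k) (Hf 𝒜 X k)
              (jstarf 𝒜 X (Nat.nth pT k) (Hf 𝒜 X k)) := by
            classical
            exact Nat.findGreatest_spec (le_of_lt hj₀len) hPj₀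
          set js := jstarf 𝒜 X (Nat.nth pT k) (Hf 𝒜 X k) with hjs
          have hjslen : js < k := by
            have := hPstar.1; rwa [lenH] at this
          have hDfjs : Df 𝒜 X js = A := by
            have h1 : (Hf 𝒜 X k).getD js ∅ = Df 𝒜 X js := HgetD 𝒜 X hjslen
            rw [← h1, ← hDk0, hkA]
          -- js is an entry of A, so js = e
          have hentry : ∀ j' < js, Df 𝒜 X j' ≠ A := by
            intro j' hj'
            have h2 := hPstar.2.2 j' hj'
            rw [HgetD 𝒜 X (lt_trans hj' hjslen), HgetD 𝒜 X hjslen, hDfjs] at h2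
            exact h2
          have hjse : js = e := by
            have h1 : e ≤ js := Nat.find_min' hne hDfjs
            rcases Nat.lt_or_ge e js with h2 | h2
            · exact absurd heA (hentry e h2)
            · omega
          -- every relevant B is in Dstar
          intro B hB
          have hBH : B ∈ Hf 𝒜 X k := by
            by_contra hc; exact hstuck ⟨B, hB, hc⟩
          obtain ⟨jB, hjBlen, hjBget, hjBmin⟩ := first_occ hBH
          have hPB : Predf 𝒜 X (Nat.nth pT k) (Hf 𝒜 X k) jB :=
            ⟨hjBlen, hjBget ▸ hB, fun j' h' => hjBget ▸ hjBmin j' h'⟩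
          have hjBe : jB ≤ e := by
            have hle : jB ≤ js := by
              rw [hjs, jstarf]
              exact Nat.le_findGreatest (le_of_lt hjBlen) hPB
            omega
          refine ⟨jB, hjBe, ?_⟩
          have h3 : (Hf 𝒜 X k).getD jB ∅ = Df 𝒜 X jB :=
            HgetD 𝒜 X (by rwa [lenH] at hjBlen)
          rw [← h3, hjBget]
      -- conclude finiteness
      have hsubbad : {k | Df 𝒜 X k = A} \ {e} ⊆
          Nat.nth pT ⁻¹' {i | (X i \ ⋃₀ Dstar).Finite} := by
        rintro k ⟨hkA, hke⟩
        have hsub := hclaim k hkA hke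
        have h1 : X (Nat.nth pT k) \ ⋃₀ Dstar ⊆
            X (Nat.nth pT k) \ ⋃₀ RELf 𝒜 X (Nat.nth pT k) :=
          Set.diff_subset_diff_right (Set.sUnion_subset_sUnion hsub)
        exact (trap_rel had (hmem k)).subset h1
      have hfin2 : ({k | Df 𝒜 X k = A} \ {e}).Finite :=
        (hbadfin.preimage hinj.injOn).subset hsubbad
      have : {k | Df 𝒜 X k = A} ⊆ ({k | Df 𝒜 X k = A} \ {e}) ∪ {e} := by
        intro k hk
        by_cases hke : k = e
        · exact Or.inr hke
        · exact Or.inl ⟨hk, hke⟩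
      exact hinf ((hfin2.union (Set.finite_singleton e)).subset this)
    -- bounds
    have hbnd : ∀ A : Set ℕ, ∃ N, ∀ k, Df 𝒜 X k = A → Nat.nth pT k < N := by
      intro A
      obtain ⟨N, hN⟩ := ((hFIN A).image (Nat.nth pT)).bddAbove
      exact ⟨N + 1, fun k hk => Nat.lt_succ_of_le (hN ⟨k, hk, rfl⟩)⟩
    choose m hm using hbnd
    refine ⟨m, fun i hi => ?_⟩
    have hik : Nat.nth pT (Nat.count pT i) = i := Nat.nth_count hi
    have h1 := hP1 (Nat.count pT i)
    rw [hik] at h1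
    have h2 := hm (Df 𝒜 X (Nat.count pT i)) (Nat.count pT i) rfl
    rw [hik] at h2
    exact ⟨Df 𝒜 X (Nat.count pT i), h1.1, h1.2, h2⟩

theorem small_ad_stronglyTight_lemma (𝒜 : Set (Set ℕ))
    (had : IsADFamily 𝒜) (hcard : Cardinal.mk ↥𝒜 < pNumber)
    (X : ℕ → Set ℕ) (hXinf : ∀ n, (X n).Infinite)
    (hfin : ∀ A ∈ idealOf 𝒜, {n : ℕ | (X n \ A).Finite}.Finite) :
    ∃ B : Set ℕ, (∀ A ∈ 𝒜, (B ∩ A).Finite) ∧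
      ∀ n, (B ∩ X n).Nonempty := by
  classical
  obtain ⟨m, hm⟩ := exists_m 𝒜 X had hXinf hfin
  -- KEY lemma
  have hKEY : ∀ FA : Set (Set ℕ), FA ⊆ 𝒜 → FA.Finite → ∀ i,
      (X i \ ⋃₀ {B | B ∈ FA ∧ m B ≤ i}).Nonempty := by
    intro FA hFA hFAfin i
    rw [Set.nonempty_iff_ne_empty]
    intro hemp
    set G : Set (Set ℕ) := {B | B ∈ FA ∧ m B ≤ i} with hG
    have hG𝒜 : G ⊆ 𝒜 := fun B hB => hFA hB.1
    have hGfin : G.Finite := hFAfin.subset (fun B hB => hB.1)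
    have hideal : X i ∈ idealOf 𝒜 := ⟨G, hG𝒜, hGfin, by rw [hemp]; exact Set.finite_empty⟩
    obtain ⟨A, hA𝒜, hAinf, hiA⟩ := hm i hideal
    have hXsub : X i ⊆ ⋃₀ G := Set.diff_eq_empty.mp hemp
    have hcov : A ∩ X i ⊆ ⋃ B ∈ G, A ∩ B := by
      rintro x ⟨hxA, hxX⟩
      obtain ⟨B, hB, hxB⟩ := hXsub hxX
      exact Set.mem_biUnion hB ⟨hxA, hxB⟩
    have hexB : ∃ B ∈ G, (A ∩ B).Infinite := by
      by_contra hall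
      push_neg at hall
      exact hAinf ((Set.Finite.biUnion hGfin hall).subset hcov)
    obtain ⟨B, hBG, hABinf⟩ := hexB
    have hAB : A = B := by
      by_contra hne
      exact hABinf (had.2.2 A hA𝒜 B (hG𝒜 hBG) hne)
    rw [hAB] at hiA
    exact absurd hBG.2 (not_le.2 hiA)
  -- countable base
  set e : List ℕ ≃ ℕ := Denumerable.eqv (List ℕ) with he
  set S : Set ℕ → ℕ → Set (List ℕ) := fun A k =>
    {l | k ≤ l.length ∧ (∀ i, (h : i < l.length) → l[i] ∈ X i) ∧
      ∀ i, (h : i < l.length) → m A ≤ i → l[i] ∉ A} with hS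
  set F : Set (Set ℕ) := Set.range (fun p : ↥𝒜 × ℕ => e '' S (p.1 : Set ℕ) p.2) with hF
  -- core SFIP
  have hcore : ∀ Q : Set (↥𝒜 × ℕ), Q.Finite →
      (⋂ p ∈ Q, S (p.1 : Set ℕ) p.2).Infinite := by
    intro Q hQ
    set FA : Set (Set ℕ) := (fun p : ↥𝒜 × ℕ => (p.1 : Set ℕ)) '' Q with hFAdef
    have hFA𝒜 : FA ⊆ 𝒜 := by rintro _ ⟨p, _, rfl⟩; exact p.1.2
    have hFAfin : FA.Finite := hQ.image _
    have hcex : ∀ i, ∃ x, x ∈ X i \ ⋃₀ {B | B ∈ FA ∧ m B ≤ i} :=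
      fun i => hKEY FA hFA𝒜 hFAfin i
    choose c hcmem using hcex
    obtain ⟨kb, hkb⟩ : ∃ kb, ∀ p ∈ Q, p.2 ≤ kb := by
      obtain ⟨kb, hkb⟩ := (hQ.image Prod.snd).bddAbove
      exact ⟨kb, fun p hp => hkb ⟨p, hp, rfl⟩⟩
    refine Set.infinite_of_injective_forall_mem
      (f := fun n : ℕ => List.ofFn (fun t : Fin (n + kb) => c t)) ?_ ?_
    · intro a b hab
      have := congrArg List.length hab
      simpa using this
    · intro n
      simp only [Set.mem_iInter]
      intro p hp
      refine ⟨?_, ?_, ?_⟩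
      · rw [List.length_ofFn]
        exact le_trans (hkb p hp) (Nat.le_add_left _ _)
      · intro i h
        rw [List.getElem_ofFn]
        exact (hcmem i).1
      · intro i h hmi hiA
        rw [List.getElem_ofFn] at hiA
        exact (hcmem i).2 ⟨(p.1 : Set ℕ), ⟨⟨p, hp, rfl⟩, hmi⟩, hiA⟩
  have hSFIP : ∀ G : Set (Set ℕ), G ⊆ F → G.Finite → G.Nonempty → (⋂₀ G).Infinite := by
    intro G hGF hGfin _
    have hch : ∀ g ∈ G, ∃ p : ↥𝒜 × ℕ, e '' S (p.1 : Set ℕ) p.2 = g := by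
      intro g hg
      obtain ⟨p, hp⟩ := hGF hg
      exact ⟨p, hp⟩
    haveI : Nonempty ↥𝒜 := had.1.nonempty.to_subtype
    choose! φ hφ using hch
    set Q : Set (↥𝒜 × ℕ) := φ '' G with hQ
    have hQfin : Q.Finite := hGfin.image _
    have hWinf := hcore Q hQfin
    have hsub : e '' (⋂ p ∈ Q, S (p.1 : Set ℕ) p.2) ⊆ ⋂₀ G := by
      intro x hx
      rw [Set.mem_sInter]
      intro g hg
      rw [← hφ g hg]
      obtain ⟨l, hl, rfl⟩ := hx
      refine ⟨l, ?_, rfl⟩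
      rw [Set.mem_iInter₂] at hl
      exact hl (φ g) ⟨g, hg, rfl⟩
    exact ((hWinf.image e.injective.injOn).mono hsub)
  have hℵ₀ : Cardinal.aleph0 ≤ Cardinal.mk ↥𝒜 := by
    rw [Cardinal.aleph0_le_mk_iff]
    exact Set.infinite_coe_iff.mpr had.1
  have hcard2 : Cardinal.mk ↥F < pNumber := by
    calc Cardinal.mk ↥F ≤ Cardinal.mk (↥𝒜 × ℕ) := Cardinal.mk_range_le
    _ = Cardinal.mk ↥𝒜 * Cardinal.aleph0 := by
        rw [Cardinal.mk_prod, Cardinal.lift_id, Cardinal.lift_id, Cardinal.mk_nat]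
    _ = Cardinal.mk ↥𝒜 := Cardinal.mul_eq_left hℵ₀ hℵ₀ Cardinal.aleph0_ne_zero
    _ < pNumber := hcard
  obtain ⟨Z, hZinf, hZ⟩ := aux_pseudo F hcard2 hSFIP
  set Y : Set (List ℕ) := e.symm '' Z with hY
  have hYinf : Y.Infinite := hZinf.image (e.symm.injective.injOn)
  have hYS : ∀ A, A ∈ 𝒜 → ∀ k, (Y \ S A k).Finite := by
    intro A hA k
    have h1 : (Z \ (e '' S A k)).Finite := hZ _ ⟨(⟨A, hA⟩, k), rfl⟩
    have h2 : Y \ S A k ⊆ e.symm '' (Z \ e '' S A k) := by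
      rintro l ⟨⟨z, hz, rfl⟩, hlS⟩
      refine ⟨z, ⟨hz, fun hz' => ?_⟩, rfl⟩
      obtain ⟨l', hl', hel⟩ := hz'
      apply hlS
      have : e.symm z = l' := by rw [← hel]; exact e.symm_apply_apply l'
      rw [this]
      exact hl'
    exact (h1.image _).subset h2
  obtain ⟨A₀, hA₀⟩ := had.1.nonempty
  have hYSne : ∀ k, (Y ∩ S A₀ k).Nonempty := by
    intro k
    have h1 := hYinf.diff (hYS A₀ hA₀ k)
    rw [Set.diff_diff_right_self] at h1
    exact h1.nonempty
  -- the increasing selector sequence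
  set s : ℕ → List ℕ := fun j =>
    Nat.rec (hYSne 0).choose (fun _ prev => (hYSne (prev.length + 1)).choose) j with hs
  have hs0 : s 0 ∈ Y ∩ S A₀ 0 := (hYSne 0).choose_spec
  have hsS : ∀ j, s (j+1) ∈ Y ∩ S A₀ ((s j).length + 1) := by
    intro j
    exact (hYSne ((s j).length + 1)).choose_spec
  have hsY : ∀ j, s j ∈ Y := by
    intro j
    cases j with
    | zero => exact hs0.1
    | succ j => exact (hsS j).1
  have hsel : ∀ j i, (h : i < (s j).length) → (s j)[i] ∈ X i := by
    intro j
    cases j with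
    | zero => exact hs0.2.2.1
    | succ j => exact (hsS j).2.2.1
  have hlen : ∀ j, (s j).length < (s (j+1)).length := by
    intro j
    have := (hsS j).2.1
    omega
  have hlenmono : StrictMono (fun j => (s j).length) := strictMono_nat_of_lt_succ hlen
  have hsinj : Function.Injective s := by
    intro a b hab
    exact hlenmono.injective (by rw [hab])
  have hlenge : ∀ j, j ≤ (s j).length := by
    intro j
    induction j with
    | zero => omega
    | succ j ih => have := hlen j; omega
  have hjex : ∀ i : ℕ, ∃ j, i < (s j).length := by
    intro i
    exact ⟨i + 1, lt_of_lt_of_le (Nat.lt_succ_self i) (hlenge (i+1))⟩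
  set jf : ℕ → ℕ := fun i => Nat.find (hjex i) with hjf
  have hjfspec : ∀ i, i < (s (jf i)).length := fun i => Nat.find_spec (hjex i)
  set f : ℕ → ℕ := fun i => (s (jf i))[i]'(hjfspec i) with hf
  refine ⟨Set.range f, ?_, ?_⟩
  · -- almost disjointness
    intro A hA
    have hbadj : {j | s j ∉ S A 0}.Finite := by
      have h1 : {j | s j ∉ S A 0} ⊆ s ⁻¹' (Y \ S A 0) := fun j hj => ⟨hsY j, hj⟩
      have h2 : (s ⁻¹' (Y \ S A 0)).Finite :=
        (hYS A hA 0).preimage hsinj.injOn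
      exact h2.subset h1
    have hIbad : {i | f i ∈ A}.Finite := by
      have hsub : {i | f i ∈ A} ⊆
          {i | i < m A} ∪ ⋃ j ∈ {j | s j ∉ S A 0}, {i | i < (s j).length} := by
        intro i hfiA
        by_cases hmem : s (jf i) ∈ S A 0
        · left
          show i < m A
          by_contra hge
          exact hmem.2.2 i (hjfspec i) (not_lt.1 hge) hfiA
        · right
          exact Set.mem_biUnion hmem (hjfspec i)
      exact ((Set.finite_lt_nat _).union
        (Set.Finite.biUnion hbadj (fun j _ => Set.finite_lt_nat _))).subset hsub
    have hsub2 : Set.range f ∩ A ⊆ f '' {i | f i ∈ A} := by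
      rintro x ⟨⟨i, rfl⟩, hxA⟩
      exact ⟨i, hxA, rfl⟩
    exact (hIbad.image f).subset hsub2
  · intro n
    exact ⟨f n, ⟨n, rfl⟩, hsel (jf n) n (hjfspec n)⟩
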